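/- Let k be a field of characteristic p > 2, V a k-vector space, and n ≥ 2. Then the composite V^{⊗n} → L_n(V) → L̄_n(V), sending a_1⊗⋯⊗a_n to the class of the left-normed graded commutator [[a_1,a_2],…,a_n], factors through the quotient (V⊗V/⟨a⊗b − b⊗a⟩) ⊗ Λ^{n−2}(V) of V^{⊗n}; equivalently, in L̄_n(V) the class of [[a_1,a_2],…,a_n] is symmetric under interchanging a_1 and a_2, and changes sign under interchanging a_i and a_{i+1} for any 3 ≤ i ≤ n−1. -/
import Mathlib
set_option maxHeartbeats 1000000


open scoped TensorProduct
open PiTensorProduct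

noncomputable section

universe u

variable (k : Type u) [Field k]

/-- The operator on the `n`-th tensor power of `V` permuting the tensor positions
according to `σ`. -/
def pact (V : Type u) [AddCommGroup V] [Module k V] (n : ℕ) (σ : Equiv.Perm (Fin n)) :
    (⨂[k]^n V) →ₗ[k] (⨂[k]^n V) :=
  (PiTensorProduct.reindex k (fun _ : Fin n => V) σ).toLinearMap

/-- The functorial action of a linear map on the `n`-th tensor power. -/
def tmap {V W : Type u} [AddCommGroup V] [Module k V] [AddCommGroup W] [Module k W]
    (n : ℕ) (f : V →ₗ[k] W) : (⨂[k]^n V) →ₗ[k] (⨂[k]^n W) :=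
  PiTensorProduct.map fun _ => f

/-- Auxiliary operators: `betaAux k V n c j` is the operator on `V^{⊗n}` applying the
(signed, with signs `c`) left-normed bracketing to the first `j+1` tensor factors. -/
def betaAux (V : Type u) [AddCommGroup V] [Module k V] (n : ℕ) (c : ℕ → k) :
    ℕ → ((⨂[k]^n V) →ₗ[k] (⨂[k]^n V))
  | 0 => LinearMap.id
  | j + 1 =>
    if h : j + 1 < n then
      (LinearMap.id - c (j + 1) • pact k V n (Fin.cycleRange ⟨j + 1, h⟩)) ∘ₗ
        betaAux V n c j
    else betaAux V n c j

/-- The graded `β_n : V^{⊗n} → V^{⊗n}`: the linear map sending `a₁ ⊗ ⋯ ⊗ a_n` to the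
left-normed iterated graded commutator `[[a₁,a₂],…,a_n]` (elements of `V` having odd
degree `1`, so that `[u, a] = u·a - (-1)^{deg u} a·u`), regarded inside `V^{⊗n}`. -/
def betaG (V : Type u) [AddCommGroup V] [Module k V] (n : ℕ) :
    (⨂[k]^n V) →ₗ[k] (⨂[k]^n V) :=
  betaAux k V n (fun j => (-1 : k) ^ j) (n - 1)

/-- `L_n(V) ⊆ V^{⊗n}`, the span of the left-normed graded commutators on elements
of `V`, i.e. the image of the graded `β_n`. -/
def LsubG (V : Type u) [AddCommGroup V] [Module k V] (n : ℕ) : Submodule k (⨂[k]^n V) :=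
  LinearMap.range (betaG k V n)

variable (V : Type u) [AddCommGroup V] [Module k V]

/-- The operator bracketing the first `i` tensor factors (graded signs). -/
def bfirst (n i : ℕ) : (⨂[k]^n V) →ₗ[k] (⨂[k]^n V) :=
  betaAux k V n (fun j => (-1 : k) ^ j) (i - 1)

/-- The operator bracketing the last `j` tensor factors (graded signs). -/
def blast (n j : ℕ) : (⨂[k]^n V) →ₗ[k] (⨂[k]^n V) :=
  pact k V n ((finRotate n) ^ (n - j)) ∘ₗ bfirst k V n j ∘ₗ
    pact k V n (((finRotate n) ^ (n - j))⁻¹)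

/-- The operator `x ⊗ y ↦ [β_i(x), β_{n-i}(y)]` on `V^{⊗n}` (`x` of length `i`, `y` of
length `n-i`), using the graded commutator of elements of degrees `i` and `n-i`:
its image is `[L_i(V), L_{n-i}(V)] ⊆ L_n(V)`. -/
def bracketPair (n i : ℕ) : (⨂[k]^n V) →ₗ[k] (⨂[k]^n V) :=
  (LinearMap.id - ((-1 : k) ^ (i * (n - i))) • pact k V n (((finRotate n) ^ i)⁻¹)) ∘ₗ
    bfirst k V n i ∘ₗ blast k V n (n - i)

/-- `Σ_{i=2}^{n-2} [L_i(V), L_{n-i}(V)] ⊆ L_n(V)`. -/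
def relBr (n : ℕ) : Submodule k (⨂[k]^n V) :=
  ⨆ i ∈ Finset.Icc 2 (n - 2), LinearMap.range (bracketPair k V n i)

/-- `L̄_n(V) = L_n(V) / Σ_{i=2}^{n-2} [L_i(V), L_{n-i}(V)]`. -/
abbrev LbarG (n : ℕ) : Type u :=
  ↥(LsubG k V n) ⧸ Submodule.comap (LsubG k V n).subtype (relBr k V n)

/-- The composite `V^{⊗n} → L_n(V) → L̄_n(V)` sending `a₁ ⊗ ⋯ ⊗ a_n` to the class of the
left-normed graded commutator `[[a₁,a₂],…,a_n]`. -/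
def QclassG (n : ℕ) : (⨂[k]^n V) → LbarG k V n := fun z =>
  Submodule.Quotient.mk ⟨betaG k V n z, LinearMap.mem_range_self _ z⟩

namespace Stmt10Aux

def zf (a j x : ℕ) : ℕ :=
  if x < a then x else if x < a + j then x + 1 else if x = a + j then a else x

def zg (a j x : ℕ) : ℕ :=
  if x < a then x else if x = a then a + j else if x ≤ a + j then x - 1 else x

def rf (a b x : ℕ) : ℕ :=
  if x < a then x + b else if x < a + b then x - a else x

variable {n : ℕ}

lemma zf_lt {a j x : ℕ} (h : a + j < n) (hx : x < n) : zf a j x < n := by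
  unfold zf; split_ifs <;> omega

lemma rf_lt {a b x : ℕ} (h : a + b ≤ n) (hx : x < n) : rf a b x < n := by
  unfold rf; split_ifs <;> omega

lemma zgf {a j x : ℕ} : zg a j (zf a j x) = x := by
  simp only [zf, zg]; split_ifs <;> omega

lemma zfg {a j x : ℕ} : zf a j (zg a j x) = x := by
  simp only [zf, zg]; split_ifs <;> omega

lemma zg_lt {a j x : ℕ} (h : a + j < n) (hx : x < n) : zg a j x < n := by
  unfold zg; split_ifs <;> omega

/-- the cycle `(a, a+1, …, a+j)` as a permutation of `Fin n` (`1` if out of range). -/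
def zeta (n a j : ℕ) : Equiv.Perm (Fin n) :=
  if h : a + j < n then
    { toFun := fun x => ⟨zf a j x.1, zf_lt h x.2⟩
      invFun := fun x => ⟨zg a j x.1, zg_lt h x.2⟩
      left_inv := fun x => Fin.ext zgf
      right_inv := fun x => Fin.ext zfg }
  else 1

/-- the block swap `[0,a) ↦ +b`, `[a,a+b) ↦ -a` as a permutation of `Fin n`. -/
def rho (n a b : ℕ) : Equiv.Perm (Fin n) :=
  if h : a + b ≤ n then
    { toFun := fun x => ⟨rf a b x.1, rf_lt h x.2⟩
      invFun := fun x => ⟨rf b a x.1, rf_lt (by omega) x.2⟩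
      left_inv := fun x => Fin.ext (by simp only [rf]; split_ifs <;> omega)
      right_inv := fun x => Fin.ext (by simp only [rf]; split_ifs <;> omega) }
  else 1

lemma zeta_apply (h : a + j < n) (x : Fin n) : zeta n a j x = ⟨zf a j x.1, zf_lt h x.2⟩ := by
  simp [zeta, h]

lemma rho_apply (h : a + b ≤ n) (x : Fin n) : rho n a b x = ⟨rf a b x.1, rf_lt h x.2⟩ := by
  simp [rho, h]

end Stmt10Aux

namespace Stmt10Aux

-- now the group-level identities
open Equiv

lemma perm_ext {σ τ : Equiv.Perm (Fin n)} (h : ∀ x : Fin n, (σ x).1 = (τ x).1) : σ = τ :=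
  Equiv.ext fun x => Fin.ext (h x)

lemma P3 (h : a + b < n) : rho n a (b + 1) * zeta n a b = zeta n 0 (a + b) * rho n a b := by
  apply perm_ext; intro x
  simp only [Equiv.Perm.mul_apply, zeta_apply (show a + b < n by omega),
    zeta_apply (show 0 + (a+b) < n by omega), rho_apply (show a + (b+1) ≤ n by omega),
    rho_apply (show a + b ≤ n by omega)]
  simp only [zf, rf]; split_ifs <;> omega

lemma P4 (h : a + b < n) : rho n (a + 1) b * zeta n a b = rho n a b := by
  apply perm_ext; intro x
  simp only [Equiv.Perm.mul_apply, zeta_apply (show a + b < n by omega),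
    rho_apply (show a + 1 + b ≤ n by omega), rho_apply (show a + b ≤ n by omega)]
  simp only [zf, rf]; split_ifs <;> omega

lemma P5 (h : a + b < n) (hb : 1 ≤ b) :
    rho n (a + 1) b * zeta n 0 (a + b) = rho n a (b + 1) := by
  apply perm_ext; intro x
  simp only [Equiv.Perm.mul_apply, zeta_apply (show 0 + (a + b) < n by omega),
    rho_apply (show a + 1 + b ≤ n by omega), rho_apply (show a + (b+1) ≤ n by omega)]
  simp only [zf, rf]; split_ifs <;> omega

lemma P6 (h : a + b < n) : zeta n 0 a * zeta n a b = zeta n 0 (a + b) := by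
  apply perm_ext; intro x
  simp only [Equiv.Perm.mul_apply, zeta_apply (show a + b < n by omega),
    zeta_apply (show 0 + a < n by omega), zeta_apply (show 0 + (a + b) < n by omega)]
  simp only [zf]; split_ifs <;> omega

lemma P7 (h : a + b < n) (hj : j < b) :
    zeta n (a + 1) j * zeta n a b = zeta n a b * zeta n a j := by
  apply perm_ext; intro x
  simp only [Equiv.Perm.mul_apply, zeta_apply (show a + b < n by omega),
    zeta_apply (show a + 1 + j < n by omega), zeta_apply (show a + j < n by omega)]
  simp only [zf]; split_ifs <;> omega

lemma P8 (h : a + b < n) (hj : j < b) :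
    zeta n (a + 1) j * zeta n 0 (a + b) = zeta n 0 (a + b) * zeta n a j := by
  apply perm_ext; intro x
  simp only [Equiv.Perm.mul_apply, zeta_apply (show 0 + (a + b) < n by omega),
    zeta_apply (show a + 1 + j < n by omega), zeta_apply (show a + j < n by omega)]
  simp only [zf]; split_ifs <;> omega

lemma P9 (h : a + 1 < n) : zeta n a 1 * zeta n a 1 = 1 := by
  apply perm_ext; intro x
  simp only [Equiv.Perm.mul_apply, zeta_apply (show a + 1 < n from h), Equiv.Perm.one_apply]
  simp only [zf]; split_ifs <;> omega

lemma P10 (h : a + 2 ≤ n) : zeta n 0 (a + 1) * zeta n 0 (a + 1) = rho n a 2 := by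
  apply perm_ext; intro x
  simp only [Equiv.Perm.mul_apply, zeta_apply (show 0 + (a + 1) < n by omega),
    rho_apply (show a + 2 ≤ n from h)]
  simp only [zf, rf]; split_ifs <;> omega

/-- disjoint-support commutation. -/
lemma P13 (h : a + j < a') : Commute (zeta n a j) (zeta n a' j') := by
  unfold zeta
  split_ifs with h1 h2 h2
  · apply perm_ext; intro x
    simp only [Equiv.Perm.mul_apply]
    show zf a j (zf a' j' x.1) = zf a' j' (zf a j x.1)
    simp only [zf]; split_ifs <;> omega
  · simp [Commute, SemiconjBy]
  · simp [Commute, SemiconjBy]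
  · simp [Commute, SemiconjBy]

lemma swap_eq_zeta (hi : 1 ≤ i) (h : i < n) (h1 : i - 1 < n) :
    Equiv.swap (⟨i - 1, h1⟩ : Fin n) ⟨i, h⟩ = zeta n (i - 1) 1 := by
  apply perm_ext; intro x
  rcases eq_or_ne x ⟨i-1, h1⟩ with rfl | hx1
  · rw [Equiv.swap_apply_left, zeta_apply (by omega)]
    simp [zf]; omega
  · rcases eq_or_ne x ⟨i, h⟩ with rfl | hx2
    · rw [Equiv.swap_apply_right, zeta_apply (by omega)]
      simp [zf]; split_ifs <;> omega
    · rw [Equiv.swap_apply_of_ne_of_ne hx1 hx2, zeta_apply (by omega)]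
      rw [Fin.ne_iff_vne] at hx1 hx2; simp at hx1 hx2
      simp [zf]; split_ifs <;> omega

lemma cycleRange_eq_zeta (h : j < n) :
    Fin.cycleRange (⟨j, h⟩ : Fin n) = zeta n 0 j := by
  obtain ⟨m, rfl⟩ : ∃ m, n = m + 1 := ⟨n - 1, by omega⟩
  apply perm_ext; intro x
  rw [zeta_apply (by omega)]
  rcases lt_trichotomy x.1 j with hx | hx | hx
  · rw [Fin.cycleRange_of_lt (by simpa [Fin.lt_iff_val_lt_val] using hx)]
    rw [Fin.val_add_one_of_lt (by simp [Fin.lt_iff_val_lt_val]; omega)]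
    simp [zf]; split_ifs <;> omega
  · rw [Fin.cycleRange_of_eq (by simp [Fin.ext_iff, hx])]
    simp [zf]; split_ifs <;> omega
  · rw [Fin.cycleRange_of_gt (by simpa [Fin.lt_iff_val_lt_val] using hx)]
    simp [zf]; split_ifs <;> omega

lemma finRotate_pow_apply (hn : 2 ≤ n) (a : ℕ) (x : Fin n) :
    (((finRotate n) ^ a) x).1 = (x.1 + a) % n := by
  induction a with
  | zero => simp [Nat.mod_eq_of_lt x.2]
  | succ a ih =>
    obtain ⟨m, rfl⟩ : ∃ m, n = m + 2 := ⟨n - 2, by omega⟩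
    rw [pow_succ', Equiv.Perm.mul_apply, finRotate_succ_apply]
    have h1 : ∀ y : Fin (m+2), ((y + 1 : Fin (m+2))).1 = (y.1 + 1) % (m + 2) := by
      intro y
      rw [Fin.val_add, Fin.val_one]
    rw [h1, ih, Nat.mod_add_mod, Nat.add_assoc]

lemma P11 (hn : 2 ≤ n) (h : a + j < n) :
    (finRotate n) ^ a * zeta n 0 j = zeta n a j * (finRotate n) ^ a := by
  apply perm_ext; intro x
  have ha : a < n := by omega
  simp only [Equiv.Perm.mul_apply, zeta_apply (show 0 + j < n by omega),
    zeta_apply (show a + j < n from h), finRotate_pow_apply hn]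
  have hmod : ∀ y : ℕ, y < n → (y + a) % n = if y + a < n then y + a else y + a - n := by
    intro y hy; split_ifs with hcase
    · exact Nat.mod_eq_of_lt hcase
    · rw [Nat.mod_eq_sub_mod (by omega), Nat.mod_eq_of_lt (by omega)]
  rw [hmod _ (zf_lt (by omega) x.2), hmod _ x.2]
  simp only [zf]; split_ifs <;> omega

lemma P12 (hn : 2 ≤ n) (hb : a + b = n) : rho n a b * (finRotate n) ^ a = 1 := by
  apply perm_ext; intro x
  simp only [Equiv.Perm.mul_apply, rho_apply (show a + b ≤ n by omega),
    Equiv.Perm.one_apply, finRotate_pow_apply hn]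
  have ha : a ≤ n := by omega
  have hmod : (x.1 + a) % n = if x.1 + a < n then x.1 + a else x.1 + a - n := by
    split_ifs with hcase
    · exact Nat.mod_eq_of_lt hcase
    · rw [Nat.mod_eq_sub_mod (by omega), Nat.mod_eq_of_lt (by omega)]
  rw [hmod]
  simp only [rf]; split_ifs <;> omega

end Stmt10Aux

namespace Stmt10Aux

variable {k : Type u} [Field k] {V : Type u} [AddCommGroup V] [Module k V] {n : ℕ}

lemma pact_mul (σ τ : Equiv.Perm (Fin n)) :
    pact k V n (σ * τ) = pact k V n σ * pact k V n τ := by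
  apply LinearMap.ext; intro x
  simp only [pact, Module.End.mul_apply, LinearEquiv.coe_coe]
  rw [show σ * τ = τ.trans σ from rfl]
  exact (PiTensorProduct.reindex_reindex τ σ x).symm

lemma pact_one : pact k V n 1 = 1 := by
  apply LinearMap.ext; intro x
  simp only [pact, LinearEquiv.coe_coe]
  rw [show (1 : Equiv.Perm (Fin n)) = Equiv.refl (Fin n) from rfl, PiTensorProduct.reindex_refl]
  rfl

variable (k V n) in
/-- one bracketing step at block starting at `a`, step `j`. -/
def Ez (a j : ℕ) : (⨂[k]^n V) →ₗ[k] (⨂[k]^n V) :=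
  1 - ((-1 : k) ^ j) • pact k V n (zeta n a j)

variable (k V n) in
/-- partial left-normed bracketing of the `b` slots `[a, a+b)`. -/
def Yop (a : ℕ) : ℕ → ((⨂[k]^n V) →ₗ[k] (⨂[k]^n V))
  | 0 => 1
  | 1 => 1
  | (j+2) => Ez k V n a (j+1) * Yop a (j+1)

lemma Yop_succ (a b : ℕ) (hb : 1 ≤ b) :
    Yop k V n a (b+1) = Ez k V n a b * Yop k V n a b := by
  obtain ⟨j, rfl⟩ : ∃ j, b = j + 1 := ⟨b - 1, by omega⟩
  rfl

lemma expand_sub_sub (c d : k) (α β : Equiv.Perm (Fin n)) :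
    (1 - c • pact k V n α) * (1 - d • pact k V n β)
      = 1 - c • pact k V n α - d • pact k V n β + (c * d) • pact k V n (α * β) := by
  rw [mul_sub, mul_one, sub_mul, one_mul, smul_mul_smul_comm, ← pact_mul]
  module

lemma Ez_comm_pi {a j : ℕ} {μ : Equiv.Perm (Fin n)}
    (h : zeta n a j * μ = μ * zeta n a j) :
    Ez k V n a j * pact k V n μ = pact k V n μ * Ez k V n a j := by
  unfold Ez
  rw [sub_mul, mul_sub, one_mul, mul_one, smul_mul_assoc, mul_smul_comm,
    ← pact_mul, ← pact_mul, h]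

lemma Yop_comm_pi (a b : ℕ) (μ : Equiv.Perm (Fin n))
    (H : ∀ j, 1 ≤ j → j < b → zeta n a j * μ = μ * zeta n a j) :
    Yop k V n a b * pact k V n μ = pact k V n μ * Yop k V n a b := by
  induction b with
  | zero => simp [Yop]
  | succ b ih =>
    match b with
    | 0 => simp [Yop]
    | b' + 1 =>
      show Ez k V n a (b'+1) * Yop k V n a (b'+1) * pact k V n μ = _
      rw [mul_assoc, ih (fun j h1 h2 => H j h1 (by omega)), ← mul_assoc,
        Ez_comm_pi (H (b'+1) (by omega) (by omega)), mul_assoc]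
      rfl

lemma Yop_shift (a b : ℕ) (μ : Equiv.Perm (Fin n))
    (H : ∀ j, 1 ≤ j → j < b → zeta n (a+1) j * μ = μ * zeta n a j) :
    Yop k V n (a+1) b * pact k V n μ = pact k V n μ * Yop k V n a b := by
  induction b with
  | zero => simp [Yop]
  | succ b ih =>
    match b with
    | 0 => simp [Yop]
    | b' + 1 =>
      show Ez k V n (a+1) (b'+1) * Yop k V n (a+1) (b'+1) * pact k V n μ = _
      rw [mul_assoc, ih (fun j h1 h2 => H j h1 (by omega))]
      have hE : Ez k V n (a+1) (b'+1) * pact k V n μ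
          = pact k V n μ * Ez k V n a (b'+1) := by
        unfold Ez
        rw [sub_mul, mul_sub, one_mul, mul_one, smul_mul_assoc, mul_smul_comm,
          ← pact_mul, ← pact_mul, H (b'+1) (by omega) (by omega)]
      rw [← mul_assoc, hE, mul_assoc]
      rfl

lemma mul_Ez_comm {X : (⨂[k]^n V) →ₗ[k] (⨂[k]^n V)} {a j : ℕ}
    (h : X * pact k V n (zeta n a j) = pact k V n (zeta n a j) * X) :
    X * Ez k V n a j = Ez k V n a j * X := by
  unfold Ez
  rw [mul_sub, sub_mul, mul_one, one_mul, mul_smul_comm, smul_mul_assoc, h]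

lemma Yop_comm_Yop0 (a b : ℕ) (c : ℕ) (hc : c ≤ a) :
    Yop k V n a b * Yop k V n 0 c = Yop k V n 0 c * Yop k V n a b := by
  induction c with
  | zero => simp [Yop]
  | succ c ih =>
    match c with
    | 0 => simp [Yop]
    | c' + 1 =>
      show Yop k V n a b * (Ez k V n 0 (c'+1) * Yop k V n 0 (c'+1)) = _
      have h1 : Yop k V n a b * Ez k V n 0 (c'+1) = Ez k V n 0 (c'+1) * Yop k V n a b := by
        apply mul_Ez_comm
        apply Yop_comm_pi
        intro j h1 h2
        exact ((P13 (show 0 + (c'+1) < a by omega)).symm).eq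
      rw [← mul_assoc, h1, mul_assoc, ih (by omega), ← mul_assoc]
      rfl

lemma Yop_conj (hn : 2 ≤ n) (a b : ℕ) (h : a + b ≤ n) :
    pact k V n ((finRotate n) ^ a) * Yop k V n 0 b
      = Yop k V n a b * pact k V n ((finRotate n) ^ a) := by
  induction b with
  | zero => simp [Yop]
  | succ b ih =>
    match b with
    | 0 => simp [Yop]
    | b' + 1 =>
      show _ = (Ez k V n a (b'+1) * Yop k V n a (b'+1)) * pact k V n ((finRotate n) ^ a)
      have hE : pact k V n ((finRotate n) ^ a) * Ez k V n 0 (b'+1)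
          = Ez k V n a (b'+1) * pact k V n ((finRotate n) ^ a) := by
        unfold Ez
        rw [mul_sub, sub_mul, mul_one, one_mul, mul_smul_comm, smul_mul_assoc,
          ← pact_mul, ← pact_mul, P11 hn (by omega)]
      show pact k V n ((finRotate n) ^ a) * (Ez k V n 0 (b'+1) * Yop k V n 0 (b'+1)) = _
      rw [← mul_assoc, hE, mul_assoc, ih (by omega), ← mul_assoc]

variable (k V n) in
/-- the chain of bracketing steps from size `m` up to size `j+1`. -/
def cont (m : ℕ) : ℕ → ((⨂[k]^n V) →ₗ[k] (⨂[k]^n V))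
  | 0 => 1
  | (j+1) => (if m ≤ j + 1 then Ez k V n 0 (j+1) else 1) * cont m j

lemma cont_eq_one {m : ℕ} : ∀ {j : ℕ}, j < m → cont k V n m j = 1
  | 0, _ => by simp [cont]
  | (j+1), h => by
      rw [cont, if_neg (by omega), one_mul, cont_eq_one (by omega)]

lemma cont_split (m : ℕ) (hm : 1 ≤ m) :
    ∀ j, m ≤ j → Yop k V n 0 (j+1) = cont k V n (m+1) j * Yop k V n 0 (m+1) := by
  intro j hj
  induction j, hj using Nat.le_induction with
  | base => rw [cont_eq_one (by omega), one_mul]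
  | succ j hj ih =>
    have : Yop k V n 0 (j+2) = Ez k V n 0 (j+1) * Yop k V n 0 (j+1) := rfl
    rw [this, ih, cont, if_pos (by omega), mul_assoc]

lemma cont_peel (m : ℕ) (hm : 1 ≤ m) :
    ∀ j, m ≤ j → cont k V n m j = cont k V n (m+1) j * Ez k V n 0 m := by
  intro j hj
  induction j, hj using Nat.le_induction with
  | base =>
    obtain ⟨m', rfl⟩ : ∃ m', m = m' + 1 := ⟨m - 1, by omega⟩
    rw [cont, if_pos le_rfl, cont_eq_one (by omega), cont_eq_one (by omega), mul_one, one_mul]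
  | succ j hj ih =>
    rw [cont, if_pos (by omega), ih, show cont k V n (m+1) (j+1)
      = (if m + 1 ≤ j + 1 then Ez k V n 0 (j+1) else 1) * cont k V n (m+1) j from rfl,
      if_pos (by omega), mul_assoc]

lemma betaAux_eq_Yop : ∀ j, j < n →
    betaAux k V n (fun t => (-1 : k) ^ t) j = Yop k V n 0 (j+1)
  | 0, _ => by
    simp [betaAux, Yop]
    rfl
  | (j+1), h => by
    rw [betaAux, dif_pos h, betaAux_eq_Yop j (by omega)]
    show _ = Ez k V n 0 (j+1) * Yop k V n 0 (j+1)
    rw [Ez, cycleRange_eq_zeta h]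
    rfl

lemma betaG_eq (hn : 1 ≤ n) : betaG k V n = Yop k V n 0 n := by
  unfold betaG
  rw [betaAux_eq_Yop (n-1) (by omega)]
  congr 1
  omega

lemma bfirst_eq (m : ℕ) (h1 : 1 ≤ m) (h2 : m ≤ n) : bfirst k V n m = Yop k V n 0 m := by
  unfold bfirst
  rw [betaAux_eq_Yop (m-1) (by omega)]
  congr 1
  omega

variable (k V n) in
/-- The operator `[x-block of size a, y-block of size b]` sitting in the first `a+b` slots. -/
def Dop (a b : ℕ) : (⨂[k]^n V) →ₗ[k] (⨂[k]^n V) :=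
  (1 - ((-1 : k) ^ (a * b)) • pact k V n (rho n a b)) * Yop k V n a b * Yop k V n 0 a

lemma D_top (hn : 2 ≤ n) (a b : ℕ) (ha : 1 ≤ a) (hb : 1 ≤ b) (hab : a + b = n) :
    Dop k V n a b = bracketPair k V n a := by
  have hba : n - a = b := by omega
  have hab2 : n - b = a := by omega
  have hrr : rho n a b = ((finRotate n) ^ a)⁻¹ := by
    apply eq_inv_of_mul_eq_one_left
    exact P12 hn hab
  unfold bracketPair blast
  rw [hba, hab2]
  rw [bfirst_eq a ha (by omega), bfirst_eq b hb (by omega)]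
  simp only [← Module.End.mul_eq_comp, ← Module.End.one_eq_id, ← hrr, hba, mul_assoc]
  have hconj2 : pact k V n ((finRotate n) ^ a) * (Yop k V n 0 b * pact k V n (rho n a b))
      = Yop k V n a b := by
    rw [← mul_assoc, Yop_conj hn a b (by omega), mul_assoc, ← pact_mul, hrr,
      mul_inv_cancel, pact_one, mul_one]
  rw [hconj2, ← Yop_comm_Yop0 a b a le_rfl, Dop, mul_assoc]

end Stmt10Aux

namespace Stmt10Aux

variable {k : Type u} [Field k] {V : Type u} [AddCommGroup V] [Module k V] {n : ℕ}

lemma expand_sub_sub' (c d : k) (α β γ : Equiv.Perm (Fin n)) :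
    (1 - c • pact k V n α) * (pact k V n β - d • pact k V n γ)
      = pact k V n β - d • pact k V n γ - c • pact k V n (α * β)
        + (c * d) • pact k V n (α * γ) := by
  simp only [mul_sub, sub_mul, one_mul, smul_mul_assoc, mul_smul_comm, smul_smul,
    ← pact_mul]
  module

lemma negpow (m : ℕ) : ((-1 : k)) ^ m = if Even m then 1 else -1 := by
  split_ifs with h
  · exact h.neg_one_pow
  · exact (Nat.not_even_iff_odd.mp h).neg_one_pow

lemma jacobi (hn : 2 ≤ n) (a b : ℕ) (ha : 1 ≤ a) (hb : 1 ≤ b) (h : a + b < n) :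
    Ez k V n 0 (a+b) * Dop k V n a b
      = Dop k V n a (b+1)
        + ((-1 : k) ^ b) • (Dop k V n (a+1) b * pact k V n (zeta n a b)) := by
  have hzY0 : pact k V n (zeta n a b) * Yop k V n 0 a
      = Yop k V n 0 a * pact k V n (zeta n a b) :=
    (Yop_comm_pi 0 a _ (fun j h1 h2 => (P13 (show 0 + j < a by omega)).eq)).symm
  have hshift1 : Yop k V n (a+1) b * pact k V n (zeta n a b)
      = pact k V n (zeta n a b) * Yop k V n a b :=
    Yop_shift a b _ (fun j h1 h2 => P7 h h2)
  have hshift2 : Yop k V n (a+1) b * pact k V n (zeta n 0 (a+b))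
      = pact k V n (zeta n 0 (a+b)) * Yop k V n a b :=
    Yop_shift a b _ (fun j h1 h2 => P8 h h2)
  have hEz0a : Ez k V n 0 a * pact k V n (zeta n a b)
      = pact k V n (zeta n a b) - ((-1:k)^a) • pact k V n (zeta n 0 (a+b)) := by
    rw [Ez, sub_mul, one_mul, smul_mul_assoc, ← pact_mul, P6 h]
  have step1 : Ez k V n 0 a * Yop k V n 0 a * pact k V n (zeta n a b)
      = (pact k V n (zeta n a b) - ((-1:k)^a) • pact k V n (zeta n 0 (a+b)))
          * Yop k V n 0 a := by
    rw [mul_assoc, ← hzY0, ← mul_assoc, hEz0a]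
  have step2 : Yop k V n (a+1) b *
      (pact k V n (zeta n a b) - ((-1:k)^a) • pact k V n (zeta n 0 (a+b)))
      = (pact k V n (zeta n a b) - ((-1:k)^a) • pact k V n (zeta n 0 (a+b)))
          * Yop k V n a b := by
    rw [mul_sub, sub_mul, hshift1, mul_smul_comm, smul_mul_assoc, hshift2]
  have hT2 : Dop k V n (a+1) b * pact k V n (zeta n a b)
      = ((1 - ((-1:k)^((a+1)*b)) • pact k V n (rho n (a+1) b)) *
          (pact k V n (zeta n a b) - ((-1:k)^a) • pact k V n (zeta n 0 (a+b)))) *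
        (Yop k V n a b * Yop k V n 0 a) := by
    calc Dop k V n (a+1) b * pact k V n (zeta n a b)
        = (1 - ((-1:k)^((a+1)*b)) • pact k V n (rho n (a+1) b)) *
            (Yop k V n (a+1) b *
              (Ez k V n 0 a * Yop k V n 0 a * pact k V n (zeta n a b))) := by
          rw [Dop, Yop_succ 0 a ha]
          simp only [mul_assoc]
      _ = (1 - ((-1:k)^((a+1)*b)) • pact k V n (rho n (a+1) b)) *
            (Yop k V n (a+1) b *
              ((pact k V n (zeta n a b) - ((-1:k)^a) • pact k V n (zeta n 0 (a+b)))
                * Yop k V n 0 a)) := by rw [step1]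
      _ = (1 - ((-1:k)^((a+1)*b)) • pact k V n (rho n (a+1) b)) *
            ((Yop k V n (a+1) b *
              (pact k V n (zeta n a b) - ((-1:k)^a) • pact k V n (zeta n 0 (a+b))))
                * Yop k V n 0 a) := by rw [← mul_assoc (Yop k V n (a+1) b)]
      _ = (1 - ((-1:k)^((a+1)*b)) • pact k V n (rho n (a+1) b)) *
            (((pact k V n (zeta n a b) - ((-1:k)^a) • pact k V n (zeta n 0 (a+b)))
              * Yop k V n a b) * Yop k V n 0 a) := by rw [step2]
      _ = _ := by simp only [mul_assoc]
  have hD1 : Dop k V n a b = (1 - ((-1:k)^(a*b)) • pact k V n (rho n a b)) *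
      (Yop k V n a b * Yop k V n 0 a) := by rw [Dop, mul_assoc]
  have hD2 : Dop k V n a (b+1) = ((1 - ((-1:k)^(a*(b+1))) • pact k V n (rho n a (b+1)))
      * Ez k V n a b) * (Yop k V n a b * Yop k V n 0 a) := by
    rw [Dop, Yop_succ a b hb]
    simp only [mul_assoc]
  rw [hD1, hD2, hT2, ← mul_assoc (Ez k V n 0 (a+b)), ← smul_mul_assoc, ← add_mul]
  congr 1
  rw [show Ez k V n 0 (a+b) = 1 - ((-1:k)^(a+b)) • pact k V n (zeta n 0 (a+b)) from rfl,
    show Ez k V n a b = 1 - ((-1:k)^b) • pact k V n (zeta n a b) from rfl,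
    expand_sub_sub, expand_sub_sub, expand_sub_sub', P3 h, P4 h, P5 h hb]
  by_cases hA : Even a <;> by_cases hB : Even b <;>
    simp only [negpow, Nat.even_mul, Nat.even_add, Nat.even_add_one, hA, hB,
      iff_true, iff_false, true_or, or_true, false_or, or_false, not_true, not_false_iff,
      if_true, if_false, eq_self_iff_true, not_not] <;>
    norm_num <;>
    module

lemma mem_relBr {a : ℕ} (ha : 2 ≤ a) (hb : a ≤ n - 2) {x : ⨂[k]^n V}
    (hx : x ∈ LinearMap.range (bracketPair k V n a)) : x ∈ relBr k V n :=
  Submodule.mem_iSup_of_mem a (Submodule.mem_iSup_of_mem (Finset.mem_Icc.mpr ⟨ha, hb⟩) hx)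

lemma LemR (hn : 2 ≤ n) : ∀ (d a b : ℕ), 2 ≤ a → 2 ≤ b → a + b + d = n →
    ∀ z, (cont k V n (a+b) (n-1) * Dop k V n a b) z ∈ relBr k V n := by
  intro d
  induction d with
  | zero =>
    intro a b ha hb hab z
    rw [cont_eq_one (by omega), one_mul, D_top hn a b (by omega) (by omega) (by omega)]
    exact mem_relBr (by omega) (by omega) ⟨z, rfl⟩
  | succ d ih =>
    intro a b ha hb hab z
    rw [cont_peel (a+b) (by omega) (n-1) (by omega), mul_assoc,
      jacobi hn a b (by omega) (by omega) (by omega), mul_add, mul_smul_comm,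
      LinearMap.add_apply, LinearMap.smul_apply]
    refine Submodule.add_mem _ ?_ (Submodule.smul_mem _ _ ?_)
    · exact ih a (b+1) ha (by omega) (by omega) z
    · rw [show cont k V n (a+b+1) (n-1) * (Dop k V n (a+1) b * pact k V n (zeta n a b))
          = (cont k V n ((a+1)+b) (n-1) * Dop k V n (a+1) b) * pact k V n (zeta n a b) by
        rw [show (a+1)+b = a+b+1 by omega, mul_assoc]]
      rw [Module.End.mul_apply]
      exact ih (a+1) b (by omega) hb (by omega) _

lemma main1 (hn : 2 ≤ n) (z : ⨂[k]^n V) :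
    betaG k V n (pact k V n (zeta n 0 1) z) = betaG k V n z := by
  have key : betaG k V n * pact k V n (zeta n 0 1) = betaG k V n := by
    rw [betaG_eq (by omega)]
    have hsplit : Yop k V n 0 n = cont k V n 2 (n-1) * Yop k V n 0 2 := by
      have h := cont_split (k := k) (V := V) (n := n) 1 (by omega) (n-1) (by omega)
      rwa [show n - 1 + 1 = n by omega] at h
    have hY2 : Yop k V n 0 2 = 1 + pact k V n (zeta n 0 1) := by
      show Ez k V n 0 1 * 1 = _
      rw [mul_one, Ez, pow_one]
      module
    rw [hsplit, mul_assoc, hY2, add_mul, one_mul, ← pact_mul, P9 (by omega), pact_one]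
    rw [add_comm]
  calc betaG k V n (pact k V n (zeta n 0 1) z)
      = (betaG k V n * pact k V n (zeta n 0 1)) z := rfl
    _ = betaG k V n z := by rw [key]

lemma main2 (hn : 2 ≤ n) (i : ℕ) (h3 : 3 ≤ i) (hi : i ≤ n - 1) (z : ⨂[k]^n V) :
    betaG k V n (pact k V n (zeta n (i-1) 1) z) + betaG k V n z ∈ relBr k V n := by
  obtain ⟨a, rfl⟩ : ∃ a, i = a + 1 := ⟨i - 1, by omega⟩
  rw [show a + 1 - 1 = a from rfl]
  have ha2 : 2 ≤ a := by omega
  have han : a + 2 ≤ n := by omega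
  have key : betaG k V n * (1 + pact k V n (zeta n a 1))
      = cont k V n (a+2) (n-1) * Dop k V n a 2 := by
    rw [betaG_eq (by omega)]
    have hsplit : Yop k V n 0 n = cont k V n (a+2) (n-1) * Yop k V n 0 (a+2) := by
      have h := cont_split (k := k) (V := V) (n := n) (a+1) (by omega) (n-1) (by omega)
      rwa [show n - 1 + 1 = n by omega] at h
    rw [hsplit, mul_assoc]
    congr 1
    -- `Yop 0 (a+2) * (1 + pact τ) = Dop a 2`
    have hY2 : Yop k V n a 2 = 1 + pact k V n (zeta n a 1) := by
      show Ez k V n a 1 * 1 = _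
      rw [mul_one, Ez, pow_one]
      module
    have hcomm : Yop k V n 0 a * (1 + pact k V n (zeta n a 1))
        = (1 + pact k V n (zeta n a 1)) * Yop k V n 0 a := by
      rw [mul_add, add_mul, mul_one, one_mul,
        Yop_comm_pi 0 a _ (fun j h1 h2 => (P13 (show 0 + j < a by omega)).eq)]
    have hYa2 : Yop k V n 0 (a+2) = Ez k V n 0 (a+1) * (Ez k V n 0 a * Yop k V n 0 a) := by
      show Ez k V n 0 (a+1) * Yop k V n 0 (a+1) = _
      rw [Yop_succ 0 a (by omega)]
    rw [hYa2, Dop, hY2]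
    simp only [mul_assoc]
    rw [hcomm]
    simp only [← mul_assoc]
    congr 1
    -- core : Ez 0 (a+1) * Ez 0 a * (1 + T) = (1 - s • pact ρ) * (1 + T)
    have hs : ((-1:k)) ^ (a*2) = 1 := by
      rw [negpow, if_pos (by exact ⟨a, by omega⟩)]
    have q2 : zeta n 0 (a+1) * zeta n a 1 = zeta n 0 a := by
      rw [← P6 (show a + 1 < n by omega), mul_assoc, P9 (show a + 1 < n by omega), mul_one]
    have E1 : pact k V n (zeta n 0 a) * pact k V n (zeta n a 1)
        = pact k V n (zeta n 0 (a+1)) := by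
      rw [← pact_mul, P6 (show a + 1 < n by omega)]
    have E2 : pact k V n (zeta n 0 (a+1)) * pact k V n (zeta n a 1)
        = pact k V n (zeta n 0 a) := by
      rw [← pact_mul, q2]
    have E4 : pact k V n (zeta n 0 (a+1)) * pact k V n (zeta n 0 (a+1))
        = pact k V n (rho n a 2) := by
      rw [← pact_mul, P10 (by omega)]
    have E5 : pact k V n (rho n a 2) * pact k V n (zeta n a 1)
        = pact k V n (zeta n 0 (a+1)) * pact k V n (zeta n 0 a) := by
      rw [← pact_mul, ← pact_mul, ← P10 (by omega), mul_assoc, q2]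
    rw [show Ez k V n 0 (a+1) = 1 - ((-1:k)^(a+1)) • pact k V n (zeta n 0 (a+1)) from rfl,
      show Ez k V n 0 a = 1 - ((-1:k)^a) • pact k V n (zeta n 0 a) from rfl,
      hs, one_smul]
    by_cases hA : Even a <;>
      simp only [negpow, Nat.even_add_one, hA, iff_true, iff_false, not_true,
        not_false_iff, if_true, if_false, not_not] <;>
      simp only [mul_add, add_mul, mul_sub, sub_mul, mul_one, one_mul, smul_mul_assoc,
        mul_smul_comm, mul_assoc, neg_smul, one_smul, E1, E2, E4, E5] <;>
      module
  have happ : (betaG k V n * (1 + pact k V n (zeta n a 1))) z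
      = betaG k V n (pact k V n (zeta n a 1) z) + betaG k V n z := by
    simp only [mul_add, mul_one, LinearMap.add_apply, Module.End.mul_apply]
    exact add_comm _ _
  rw [← happ, key]
  exact LemR hn (n - (a+2)) a 2 ha2 le_rfl (by omega) z

end Stmt10Aux

/-- Let `k` be a field of characteristic `p > 2`, `V` a `k`-vector
space and `n ≥ 2`.  Then the composite `V^{⊗n} → L_n(V) → L̄_n(V)`,
`a₁ ⊗ ⋯ ⊗ a_n ↦ [[a₁,a₂],…,a_n]`, factors through
`(V ⊗ V / ⟨a⊗b - b⊗a⟩) ⊗ Λ^{n-2}(V)`; equivalently (as formalized here): in `L̄_n(V)`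
the class of `[[a₁,a₂],…,a_n]` is symmetric under interchanging `a₁` and `a₂`, and
changes sign under interchanging `a_i` and `a_{i+1}` for any `3 ≤ i ≤ n-1`. -/
theorem statement10 (k : Type u) [Field k] (p : ℕ) [CharP k p] (hp : 2 < p)
    (V : Type u) [AddCommGroup V] [Module k V] (n : ℕ) (hn : 2 ≤ n) :
    (∀ a : Fin n → V,
      QclassG k V n (tprod k fun t =>
          a (Equiv.swap (⟨0, by omega⟩ : Fin n) (⟨1, by omega⟩ : Fin n) t))
        = QclassG k V n (tprod k a)) ∧
    (∀ a : Fin n → V, ∀ (i : ℕ) (h3 : 3 ≤ i) (hi : i ≤ n - 1),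
      QclassG k V n (tprod k fun t =>
          a (Equiv.swap (⟨i - 1, by omega⟩ : Fin n) (⟨i, by omega⟩ : Fin n) t))
        = - QclassG k V n (tprod k a)) := by
  have hn2 : 2 ≤ n := hn
  constructor
  · intro a
    have hsw : Equiv.swap (⟨0, by omega⟩ : Fin n) (⟨1, by omega⟩ : Fin n)
        = Stmt10Aux.zeta n 0 1 := by
      have h := Stmt10Aux.swap_eq_zeta (n := n) (i := 1) le_rfl (by omega) (by omega)
      simpa using h
    have hz : (tprod k fun t =>
          a (Equiv.swap (⟨0, by omega⟩ : Fin n) (⟨1, by omega⟩ : Fin n) t))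
        = pact k V n (Stmt10Aux.zeta n 0 1) (tprod k a) := by
      simp only [pact, LinearEquiv.coe_coe, PiTensorProduct.reindex_tprod]
      congr 1
      funext t
      rw [← hsw, Equiv.symm_swap]
    rw [hz]
    unfold QclassG
    congr 1
    exact Subtype.ext (Stmt10Aux.main1 hn2 _)
  · intro a i h3 hi
    have hin : i < n := by omega
    have hsw : Equiv.swap (⟨i - 1, by omega⟩ : Fin n) (⟨i, by omega⟩ : Fin n)
        = Stmt10Aux.zeta n (i-1) 1 :=
      Stmt10Aux.swap_eq_zeta (by omega) hin (by omega)
    have hz : (tprod k fun t =>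
          a (Equiv.swap (⟨i - 1, by omega⟩ : Fin n) (⟨i, by omega⟩ : Fin n) t))
        = pact k V n (Stmt10Aux.zeta n (i-1) 1) (tprod k a) := by
      simp only [pact, LinearEquiv.coe_coe, PiTensorProduct.reindex_tprod]
      congr 1
      funext t
      rw [← hsw, Equiv.symm_swap]
    rw [hz]
    have hmem := Stmt10Aux.main2 hn2 i h3 hi (tprod k a)
    unfold QclassG
    rw [eq_neg_iff_add_eq_zero, ← Submodule.Quotient.mk_add, Submodule.Quotient.mk_eq_zero,
      Submodule.mem_comap]
    simpa using hmem

end
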